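/- For natural numbers n ≥ 1 and k ≥ 0, the complete homogeneous symmetric polynomial h_k evaluated at the k variables being the n quantities 1, q, q^2, ..., q^{n-1} equals the Gaussian binomial coefficient qbinom(n+k-1, k), i.e., h_k(1, q, ..., q^{n-1}) = (q^n; q)_k / (q; q)_k = qbinom(n+k-1, k). -/

import Mathlib

open Finset

/-- The `q`-analogue `[n]_q = 1 + q + ⋯ + q^(n-1)` as a rational function in `q`. -/
noncomputable def qInt (n : ℕ) : RatFunc ℚ := ∑ i ∈ Finset.range n, RatFunc.X ^ i

/-- The `q`-factorial `[n]_q! = [n]_q [n-1]_q ⋯ [1]_q`. -/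
noncomputable def qFact : ℕ → RatFunc ℚ
  | 0 => 1
  | n + 1 => qInt (n + 1) * qFact n

/-- The Gaussian binomial coefficient `[n]_q! / ([k]_q! [n-k]_q!)`. -/
noncomputable def qBinom (n k : ℕ) : RatFunc ℚ :=
  if k ≤ n then qFact n / (qFact k * qFact (n - k)) else 0

/-- The `q`-rising factorial `(a; q)_s = (1-a)(1-qa)⋯(1-q^(s-1)a)`. -/
noncomputable def qPoch (a : RatFunc ℚ) (s : ℕ) : RatFunc ℚ :=
  ∏ i ∈ Finset.range s, (1 - RatFunc.X ^ i * a)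

/-- The complete homogeneous symmetric polynomial `h_k` evaluated at the `n` quantities
`1, q, q², …, q^(n-1)`: the sum over all multisets of size `k` drawn from `{0, …, n-1}`
of `q` raised to the sum of the chosen exponents. -/
noncomputable def hEvalPowers (n k : ℕ) : Polynomial ℚ :=
  ∑ m ∈ (Finset.range n).sym k, Polynomial.X ^ ((m : Sym ℕ k).1.sum)

lemma one_sub_X_pow_ne_zero (j : ℕ) (hj : 0 < j) :
    (1 : RatFunc ℚ) - RatFunc.X ^ j ≠ 0 := by
  rw [sub_ne_zero]
  intro h
  have h2 : algebraMap (Polynomial ℚ) (RatFunc ℚ) 1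
      = algebraMap (Polynomial ℚ) (RatFunc ℚ) (Polynomial.X ^ j) := by
    simpa [map_pow, RatFunc.algebraMap_X] using h
  have h3 := RatFunc.algebraMap_injective (K := ℚ) h2
  have := congrArg Polynomial.natDegree h3
  simp at this
  omega

lemma qPoch_X_ne_zero (s : ℕ) : qPoch RatFunc.X s ≠ 0 := by
  rw [qPoch]
  apply Finset.prod_ne_zero_iff.mpr
  intro i _
  rw [← pow_succ]
  exact one_sub_X_pow_ne_zero (i + 1) (Nat.succ_pos i)

lemma sym_range_succ (n k : ℕ) :
    (Finset.range (n+1)).sym (k+1)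
      = ((Finset.range n).sym (k+1)) ∪ (((Finset.range (n+1)).sym k).image (Sym.cons n)) := by
  ext m
  simp only [mem_sym_iff, mem_union, mem_image, mem_range]
  constructor
  · intro h
    by_cases hn : n ∈ m
    · right
      have hn1 : n ∈ m.1 := hn
      obtain ⟨t, ht⟩ := Multiset.exists_cons_of_mem hn1
      have hcard : Multiset.card t = k := by
        have h2 := m.2
        rw [ht] at h2
        simpa using h2
      refine ⟨⟨t, hcard⟩, fun a ha => ?_, ?_⟩
      · have ham : a ∈ m := by
          show a ∈ m.1
          rw [ht]
          exact Multiset.mem_cons_of_mem ha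
        exact h a ham
      · apply Sym.coe_injective
        change n ::ₘ t = _
        exact ht.symm
    · left
      intro a ha
      have h1 := h a ha
      have : a ≠ n := fun he => hn (he ▸ ha)
      omega
  · rintro (h | ⟨m', hm', rfl⟩)
    · intro a ha; have := h a ha; omega
    · intro a ha
      rw [Sym.mem_cons] at ha
      rcases ha with rfl | ha
      · omega
      · exact hm' a ha

lemma hEval_rec (n k : ℕ) :
    hEvalPowers (n+1) (k+1)
      = hEvalPowers n (k+1) + Polynomial.X ^ n * hEvalPowers (n+1) k := by
  rw [hEvalPowers, hEvalPowers, hEvalPowers, sym_range_succ, Finset.sum_union, Finset.sum_image]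
  · rw [Finset.mul_sum]
    congr 1
    apply Finset.sum_congr rfl
    intro m _
    rw [show ((Sym.cons n m) : Sym ℕ (k+1)).1 = n ::ₘ m.1 from rfl, Multiset.sum_cons, pow_add]
  · intro a _ b _ hab
    exact (Sym.cons_inj_right n a b).mp hab
  · rw [Finset.disjoint_left]
    intro m hm hm2
    rw [Finset.mem_image] at hm2
    obtain ⟨m', _, rfl⟩ := hm2
    rw [Finset.mem_sym_iff] at hm
    have := hm n (Sym.mem_cons_self n m')
    simp at this

lemma hEval_key (k n : ℕ) :
    algebraMap (Polynomial ℚ) (RatFunc ℚ) (hEvalPowers n k)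
      = qPoch (RatFunc.X ^ n) k / qPoch RatFunc.X k := by
  induction k generalizing n with
  | zero =>
    simp [hEvalPowers, qPoch, show ((∅ : Sym ℕ 0) : Multiset ℕ).sum = 0 from rfl]
  | succ k ih =>
    induction n with
    | zero =>
      have hnum : qPoch ((RatFunc.X : RatFunc ℚ) ^ 0) (k+1) = 0 := by
        apply Finset.prod_eq_zero (Finset.mem_range.mpr (Nat.succ_pos k))
        simp
      rw [hnum, zero_div]
      simp [hEvalPowers]
    | succ n ihn =>
      rw [hEval_rec, map_add, map_mul, map_pow, RatFunc.algebraMap_X, ihn, ih]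
      have hD : qPoch RatFunc.X k ≠ 0 := qPoch_X_ne_zero k
      have hD1 : qPoch RatFunc.X (k+1) ≠ 0 := qPoch_X_ne_zero (k+1)
      have h1 : qPoch ((RatFunc.X : RatFunc ℚ) ^ n) (k+1)
          = qPoch (RatFunc.X ^ (n+1)) k * (1 - RatFunc.X ^ n) := by
        rw [qPoch, qPoch, Finset.prod_range_succ', pow_zero, one_mul]
        congr 1
        apply Finset.prod_congr rfl
        intro i _
        ring
      have h2 : qPoch ((RatFunc.X : RatFunc ℚ) ^ (n+1)) (k+1)
          = qPoch (RatFunc.X ^ (n+1)) k * (1 - RatFunc.X ^ (n+k+1)) := by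
        rw [qPoch, qPoch, Finset.prod_range_succ]
        congr 2
        ring
      have h3 : qPoch (RatFunc.X : RatFunc ℚ) (k+1)
          = qPoch RatFunc.X k * (1 - RatFunc.X ^ (k+1)) := by
        rw [qPoch, qPoch, Finset.prod_range_succ, ← pow_succ]
      have hd : (1 : RatFunc ℚ) - RatFunc.X ^ (k+1) ≠ 0 :=
        one_sub_X_pow_ne_zero (k+1) (Nat.succ_pos k)
      rw [h1, h2, h3]
      field_simp
      ring

lemma qFact_mul_pow (m : ℕ) : qFact m * (1 - RatFunc.X) ^ m = qPoch RatFunc.X m := by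
  induction m with
  | zero => simp [qFact, qPoch]
  | succ m ih =>
    rw [qFact, pow_succ, qPoch, Finset.prod_range_succ, ← qPoch, ← ih]
    have hg : qInt (m+1) * (1 - RatFunc.X) = 1 - RatFunc.X ^ m * RatFunc.X := by
      have h := geom_sum_mul (RatFunc.X : RatFunc ℚ) (m+1)
      rw [qInt]
      linear_combination -h
    linear_combination (qFact m * (1 - RatFunc.X) ^ m) * hg

lemma qFact_ne_zero (m : ℕ) : qFact m ≠ 0 := by
  intro h
  apply qPoch_X_ne_zero m
  rw [← qFact_mul_pow, h, zero_mul]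

lemma qPoch_X_add (m k : ℕ) :
    qPoch RatFunc.X (m + k) = qPoch RatFunc.X m * qPoch (RatFunc.X ^ (m+1)) k := by
  rw [qPoch, qPoch, qPoch, Finset.prod_range_add]
  congr 1
  apply Finset.prod_congr rfl
  intro i _
  ring

theorem hsymm_eval_qpowers (n k : ℕ) (hn : 1 ≤ n) :
    algebraMap (Polynomial ℚ) (RatFunc ℚ) (hEvalPowers n k)
        = qPoch (RatFunc.X ^ n) k / qPoch RatFunc.X k ∧
      algebraMap (Polynomial ℚ) (RatFunc ℚ) (hEvalPowers n k) = qBinom (n + k - 1) k := by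
  have hG := hEval_key k n
  refine ⟨hG, hG.trans ?_⟩
  obtain ⟨m, rfl⟩ : ∃ m, n = m + 1 := ⟨n - 1, by omega⟩
  have hidx : m + 1 + k - 1 = m + k := by omega
  rw [hidx, qBinom, if_pos (Nat.le_add_left k m), show m + k - k = m from by omega]
  rw [div_eq_div_iff (qPoch_X_ne_zero k) (mul_ne_zero (qFact_ne_zero k) (qFact_ne_zero m))]
  have hx : ((1 : RatFunc ℚ) - RatFunc.X) ≠ 0 := by
    simpa using one_sub_X_pow_ne_zero 1 one_pos
  apply mul_right_cancel₀ (pow_ne_zero (m + k) hx)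
  have hk := qFact_mul_pow k
  have hm := qFact_mul_pow m
  have hmk := qFact_mul_pow (m + k)
  have hadd := qPoch_X_add m k
  linear_combination (qPoch (RatFunc.X ^ (m+1)) k * qFact m * (1 - RatFunc.X) ^ m) * hk
    + (qPoch (RatFunc.X ^ (m+1)) k * qPoch RatFunc.X k) * hm
    - qPoch RatFunc.X k * hmk - qPoch RatFunc.X k * hadd
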